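/- arXiv:2509.08236 — 5 statements merged into one kernel-verified Lean document; each statement's English description precedes it below -/
import Mathlib

section
/- Let x̄ be an n×m real matrix of normalized evaluations (n ≥ 2 alternatives, m ≥ 1 criteria) and let w_1, …, w_m > 0 be weights. Define the per-criterion dominance d_j(s,t) = (w_j·(s−t))^{0.88} if s > t, 0 if s = t, and −2.25·w_j·(t−s)^{0.88} if s < t; the total dominance D_{i,k} = Σ_{j=1}^m d_j(x̄^j_i, x̄^j_k); and the score ŝ_i = Σ_{k=1}^n D_{i,k}. If alternative i1 weakly Pareto dominates alternative i2, i.e. x̄^j_{i1} ≥ x̄^j_{i2} for every criterion j, then ŝ_{i1} ≥ ŝ_{i2}. -/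
/-- Let `x̄` be an `n × m` matrix of normalized evaluations (`n ≥ 2`,
`m ≥ 1`) and `w_j > 0` weights. With the per-criterion dominance
`d_j(s,t) = (w_j*(s-t))^0.88` if `s > t`, `0` if `s = t`, `-2.25*w_j*(t-s)^0.88` if
`s < t`, the total dominance `D_{i,k} = ∑ j, d_j(x̄^j_i, x̄^j_k)`, and the score
`ŝ_i = ∑ k, D_{i,k}`: if alternative `i1` weakly Pareto dominates `i2`
(`x̄^j_{i1} ≥ x̄^j_{i2}` for all `j`), then `ŝ_{i1} ≥ ŝ_{i2}`. -/
theorem todim_score_monotone_weak_pareto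
    (n m : ℕ) (hn : 2 ≤ n) (hm : 1 ≤ m)
    (xbar : Fin n → Fin m → ℝ)
    (w : Fin m → ℝ) (hw : ∀ j, 0 < w j)
    (d : Fin m → ℝ → ℝ → ℝ)
    (hd_gt : ∀ (j : Fin m) (s t : ℝ), t < s → d j s t = (w j * (s - t)) ^ (0.88 : ℝ))
    (hd_eq : ∀ (j : Fin m) (s t : ℝ), s = t → d j s t = 0)
    (hd_lt : ∀ (j : Fin m) (s t : ℝ), s < t →
      d j s t = -2.25 * w j * (t - s) ^ (0.88 : ℝ))
    (i1 i2 : Fin n)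
    (hpar : ∀ j : Fin m, xbar i2 j ≤ xbar i1 j) :
    (∑ k, ∑ j, d j (xbar i2 j) (xbar k j)) ≤ ∑ k, ∑ j, d j (xbar i1 j) (xbar k j) := by
  have key : ∀ (j : Fin m) (s1 s2 t : ℝ), s1 ≤ s2 → d j s1 t ≤ d j s2 t := by
    intro j s1 s2 t h12
    have hwj := hw j
    have hnonneg : ∀ u : ℝ, 0 ≤ u → 0 ≤ u ^ (0.88 : ℝ) := fun u hu =>
      Real.rpow_nonneg hu _
    rcases lt_trichotomy s1 t with h1 | h1 | h1
    · rw [hd_lt j s1 t h1]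
      rcases lt_trichotomy s2 t with h2 | h2 | h2
      · rw [hd_lt j s2 t h2]
        have hmono : (t - s2) ^ (0.88 : ℝ) ≤ (t - s1) ^ (0.88 : ℝ) :=
          Real.rpow_le_rpow (by linarith) (by linarith) (by norm_num)
        nlinarith [hnonneg (t - s2) (by linarith)]
      · rw [hd_eq j s2 t h2]
        nlinarith [hnonneg (t - s1) (by linarith)]
      · rw [hd_gt j s2 t h2]
        have := hnonneg (w j * (s2 - t)) (by nlinarith)
        nlinarith [hnonneg (t - s1) (by linarith)]
    · rw [hd_eq j s1 t h1]
      rcases eq_or_lt_of_le h12 with h2 | h2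
      · rw [hd_eq j s2 t (h2 ▸ h1)]
      · rw [hd_gt j s2 t (h1 ▸ h2)]
        exact hnonneg _ (by nlinarith)
    · rw [hd_gt j s1 t h1, hd_gt j s2 t (lt_of_lt_of_le h1 h12)]
      exact Real.rpow_le_rpow (by nlinarith) (by nlinarith) (by norm_num)
  refine Finset.sum_le_sum fun k _ => Finset.sum_le_sum fun j _ => ?_
  exact key j _ _ _ (hpar j)
end

section
/- Let x̄ be an n×m real matrix of normalized evaluations (n ≥ 2 alternatives, m ≥ 1 criteria) and let w_1, …, w_m > 0 be weights. Define the per-criterion dominance d_j(s,t) = (w_j·(s−t))^{0.88} if s > t, 0 if s = t, and −2.25·w_j·(t−s)^{0.88} if s < t; the total dominance D_{i,k} = Σ_{j=1}^m d_j(x̄^j_i, x̄^j_k); and the score ŝ_i = Σ_{k=1}^n D_{i,k}. If alternative i1 strictly Pareto dominates alternative i2, i.e. x̄^j_{i1} ≥ x̄^j_{i2} for every criterion j with strict inequality for at least one criterion, then ŝ_{i1} > ŝ_{i2}. -/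
private lemma d_strictMono
    {m : ℕ} (w : Fin m → ℝ) (hw : ∀ j, 0 < w j)
    (d : Fin m → ℝ → ℝ → ℝ)
    (hd_gt : ∀ (j : Fin m) (s t : ℝ), t < s → d j s t = (w j * (s - t)) ^ (0.88 : ℝ))
    (hd_eq : ∀ (j : Fin m) (s t : ℝ), s = t → d j s t = 0)
    (hd_lt : ∀ (j : Fin m) (s t : ℝ), s < t → d j s t = -2.25 * w j * (t - s) ^ (0.88 : ℝ))
    (j : Fin m) (t : ℝ) {s2 s1 : ℝ} (h : s2 < s1) :
    d j s2 t < d j s1 t := by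
  have hwj := hw j
  have hp : (0:ℝ) < 0.88 := by norm_num
  rcases lt_trichotomy s2 t with h2 | h2 | h2
  · rw [hd_lt j s2 t h2]
    have hneg : -2.25 * w j * (t - s2) ^ (0.88:ℝ) < 0 := by
      have := Real.rpow_pos_of_pos (show (0:ℝ) < t - s2 by linarith) 0.88
      nlinarith
    rcases lt_trichotomy s1 t with h1 | h1 | h1
    · rw [hd_lt j s1 t h1]
      have hlt : (t - s1) ^ (0.88:ℝ) < (t - s2) ^ (0.88:ℝ) :=
        Real.rpow_lt_rpow (by linarith) (by linarith) hp
      nlinarith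
    · rw [hd_eq j s1 t h1]; exact hneg
    · rw [hd_gt j s1 t h1]
      have := Real.rpow_pos_of_pos (show (0:ℝ) < w j * (s1 - t) by nlinarith) 0.88
      linarith
  · rw [hd_eq j s2 t h2]
    have h1 : t < s1 := h2 ▸ h
    rw [hd_gt j s1 t h1]
    exact Real.rpow_pos_of_pos (by nlinarith) 0.88
  · rw [hd_gt j s2 t h2, hd_gt j s1 t (h2.trans h)]
    exact Real.rpow_lt_rpow (by nlinarith) (by nlinarith) hp

/-- Let `x̄` be an `n × m` matrix of normalized evaluations (`n ≥ 2`,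
`m ≥ 1`) and `w_j > 0` weights. With the per-criterion dominance
`d_j(s,t) = (w_j*(s-t))^0.88` if `s > t`, `0` if `s = t`, `-2.25*w_j*(t-s)^0.88` if
`s < t`, the total dominance `D_{i,k} = ∑ j, d_j(x̄^j_i, x̄^j_k)`, and the score
`ŝ_i = ∑ k, D_{i,k}`: if alternative `i1` strictly Pareto dominates `i2`
(`x̄^j_{i1} ≥ x̄^j_{i2}` for all `j`, with strict inequality for some `j`), then
`ŝ_{i1} > ŝ_{i2}`. -/
theorem todim_score_strictMono_strict_pareto
    (n m : ℕ) (hn : 2 ≤ n) (hm : 1 ≤ m)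
    (xbar : Fin n → Fin m → ℝ)
    (w : Fin m → ℝ) (hw : ∀ j, 0 < w j)
    (d : Fin m → ℝ → ℝ → ℝ)
    (hd_gt : ∀ (j : Fin m) (s t : ℝ), t < s → d j s t = (w j * (s - t)) ^ (0.88 : ℝ))
    (hd_eq : ∀ (j : Fin m) (s t : ℝ), s = t → d j s t = 0)
    (hd_lt : ∀ (j : Fin m) (s t : ℝ), s < t →
      d j s t = -2.25 * w j * (t - s) ^ (0.88 : ℝ))
    (i1 i2 : Fin n)
    (hpar : ∀ j : Fin m, xbar i2 j ≤ xbar i1 j)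
    (hstrict : ∃ j : Fin m, xbar i2 j < xbar i1 j) :
    (∑ k, ∑ j, d j (xbar i2 j) (xbar k j)) < ∑ k, ∑ j, d j (xbar i1 j) (xbar k j) := by
  have hmono : ∀ (j : Fin m) (t : ℝ), d j (xbar i2 j) t ≤ d j (xbar i1 j) t := by
    intro j t
    rcases eq_or_lt_of_le (hpar j) with he | hlt
    · rw [he]
    · exact le_of_lt (d_strictMono w hw d hd_gt hd_eq hd_lt j t hlt)
  apply Finset.sum_lt_sum
  · intro k _
    exact Finset.sum_le_sum fun j _ => hmono j (xbar k j)
  · refine ⟨i2, Finset.mem_univ _, ?_⟩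
    obtain ⟨j0, hj0⟩ := hstrict
    exact Finset.sum_lt_sum (fun j _ => hmono j (xbar i2 j))
      ⟨j0, Finset.mem_univ _,
        d_strictMono w hw d hd_gt hd_eq hd_lt j0 (xbar i2 j0) hj0⟩
end

section
/- Let X be an n×m matrix of strictly positive evaluations (n ≥ 1 alternatives, m ≥ 1 criteria) and let v ≥ 2 be an integer. Form the expanded (n+v)×m evaluation matrix by appending the virtual alternatives â_{1,v}, …, â_{v,v}, and apply the entropy-weight TODIM method to it: normalize each column by its maximum, compute entropy weights w_j = (1 − ê_j)/Σ_{j'} (1 − ê_{j'}) with ê_j = (Σ_i x̄^j_i ln x̄^j_i)/ln(n+v), and compute scores ŝ_i = Σ_k Σ_j d_j(x̄^j_i, x̄^j_k) with d_j(s,t) = (w_j·(s−t))^{0.88} if s > t, 0 if s = t, −2.25·w_j·(t−s)^{0.88} if s < t. Then the top virtual alternative â_{v,v} attains the maximal score: ŝ(â_{v,v}) ≥ ŝ(a) for every alternative a of the expanded set. -/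
/-- Let `X` be an `n × m` matrix of strictly positive evaluations
(`n ≥ 1`, `m ≥ 1`) and `v ≥ 2`. Form the expanded `(n+v) × m` matrix `Y` by appending
the virtual alternatives (the virtual index `d : Fin v` encodes position `d+1`, with
evaluation `xmin j + ((d-1)/(v-1)) * (xmax j - xmin j)` on criterion `j`), and apply the
entropy-weight TODIM method to `Y`: normalize each column by its maximum, compute entropy
weights `w_j = (1 - ê_j)/∑ j', (1 - ê_{j'})` with
`ê_j = (∑ i, x̄^j_i ln x̄^j_i)/ln(n+v)`, and compute scores
`ŝ_i = ∑ k, ∑ j, d_j(x̄^j_i, x̄^j_k)` with `d_j(s,t) = (w_j*(s-t))^0.88` if `s > t`,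
`0` if `s = t`, `-2.25*w_j*(t-s)^0.88` if `s < t`. Then the top virtual alternative
`â_{v,v}` attains the maximal score. -/
theorem top_virtual_alternative_maximal_score
    (n m v : ℕ) (hn : 1 ≤ n) (hm : 1 ≤ m) (hv : 2 ≤ v)
    (X : Fin n → Fin m → ℝ) (hXpos : ∀ i j, 0 < X i j)
    (xmax xmin : Fin m → ℝ)
    (hmax : ∀ j, IsGreatest (Set.range fun i => X i j) (xmax j))
    (hmin : ∀ j, IsLeast (Set.range fun i => X i j) (xmin j))
    (Y : Fin (n + v) → Fin m → ℝ)
    (hYorig : ∀ (i : Fin n) (j : Fin m), Y (Fin.castAdd v i) j = X i j)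
    (hYvirt : ∀ (d : Fin v) (j : Fin m),
      Y (Fin.natAdd n d) j = xmin j + ((d : ℝ) / ((v : ℝ) - 1)) * (xmax j - xmin j))
    (ymax : Fin m → ℝ)
    (hymax : ∀ j, IsGreatest (Set.range fun i => Y i j) (ymax j))
    (xbar : Fin (n + v) → Fin m → ℝ)
    (hxbar : ∀ i j, xbar i j = Y i j / ymax j)
    (e : Fin m → ℝ)
    (he : ∀ j, e j =
      (∑ i, xbar i j * Real.log (xbar i j)) / Real.log ((n + v : ℕ) : ℝ))
    (w : Fin m → ℝ)
    (hw : ∀ j, w j = (1 - e j) / ∑ j', (1 - e j'))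
    (d : Fin m → ℝ → ℝ → ℝ)
    (hd_gt : ∀ (j : Fin m) (s t : ℝ), t < s → d j s t = (w j * (s - t)) ^ (0.88 : ℝ))
    (hd_eq : ∀ (j : Fin m) (s t : ℝ), s = t → d j s t = 0)
    (hd_lt : ∀ (j : Fin m) (s t : ℝ), s < t →
      d j s t = -2.25 * w j * (t - s) ^ (0.88 : ℝ))
    (score : Fin (n + v) → ℝ)
    (hscore : ∀ i, score i = ∑ k, ∑ j, d j (xbar i j) (xbar k j)) :
    ∀ a : Fin (n + v), score a ≤ score (Fin.natAdd n ⟨v - 1, by omega⟩) := by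

  intro a
  set top : Fin (n + v) := Fin.natAdd n ⟨v - 1, by omega⟩ with htop
  have hv1 : (0:ℝ) < (v:ℝ) - 1 := by
    have : (2:ℝ) ≤ (v:ℝ) := by exact_mod_cast hv
    linarith
  have hminmax : ∀ j, xmin j ≤ xmax j := fun j => (hmin j).2 (hmax j).1
  have hxminpos : ∀ j, 0 < xmin j := by
    intro j
    obtain ⟨i, hi⟩ := (hmin j).1
    rw [← hi]; exact hXpos i j
  -- the top virtual alternative attains xmax
  have hYtop : ∀ j, Y top j = xmax j := by
    intro j
    rw [htop, hYvirt]
    have hc : (((⟨v - 1, by omega⟩ : Fin v) : ℕ) : ℝ) = (v : ℝ) - 1 := by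
      simp only [Fin.val_mk]
      push_cast [Nat.cast_sub (by omega : 1 ≤ v)]
      ring
    rw [hc, div_self (ne_of_gt hv1)]; ring
  -- all entries of Y are bounded by xmax and positive
  have hYle : ∀ i j, Y i j ≤ xmax j := by
    intro i j
    induction i using Fin.addCases with
    | left i => rw [hYorig]; exact (hmax j).2 ⟨i, rfl⟩
    | right d0 =>
      rw [hYvirt]
      have hd0 : ((d0 : ℕ) : ℝ) ≤ (v : ℝ) - 1 := by
        have := d0.isLt
        have : ((d0 : ℕ) : ℝ) ≤ ((v - 1 : ℕ) : ℝ) := by exact_mod_cast (by omega : (d0:ℕ) ≤ v - 1)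
        rw [Nat.cast_sub (by omega : 1 ≤ v)] at this
        simpa using this
      have hθ : (d0 : ℝ) / ((v : ℝ) - 1) ≤ 1 := by
        rw [div_le_one hv1]; exact hd0
      nlinarith [hminmax j, hθ]
  have hYpos : ∀ i j, 0 < Y i j := by
    intro i j
    induction i using Fin.addCases with
    | left i => rw [hYorig]; exact hXpos i j
    | right d0 =>
      rw [hYvirt]
      have h1 : 0 ≤ (d0 : ℝ) / ((v : ℝ) - 1) := by positivity
      nlinarith [hxminpos j, hminmax j]
  -- ymax equals xmax
  have hymaxeq : ∀ j, ymax j = xmax j := by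
    intro j
    refine le_antisymm ?_ ?_
    · obtain ⟨i, hi⟩ := (hymax j).1
      rw [← hi]; exact hYle i j
    · rw [← hYtop j]; exact (hymax j).2 ⟨top, rfl⟩
  have hymaxpos : ∀ j, 0 < ymax j := by
    intro j; rw [hymaxeq]; exact lt_of_lt_of_le (hxminpos j) (hminmax j)
  -- xbar properties
  have hxbarpos : ∀ i j, 0 < xbar i j := by
    intro i j; rw [hxbar]; exact div_pos (hYpos i j) (hymaxpos j)
  have hxbarle1 : ∀ i j, xbar i j ≤ 1 := by
    intro i j; rw [hxbar, div_le_one (hymaxpos j), hymaxeq]; exact hYle i j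
  have hxbartop : ∀ i j, xbar i j ≤ xbar top j := by
    intro i j
    rw [hxbar, hxbar]
    gcongr
    · exact (hymaxpos j).le
    · rw [hYtop, ← hymaxeq]; exact (hymax j).2 ⟨i, rfl⟩
  -- entropy is nonpositive, weights nonnegative
  have hennp : ∀ j, e j ≤ 0 := by
    intro j
    rw [he]
    apply div_nonpos_of_nonpos_of_nonneg
    · apply Finset.sum_nonpos
      intro i _
      exact mul_nonpos_of_nonneg_of_nonpos (le_of_lt (hxbarpos i j))
        (Real.log_nonpos (le_of_lt (hxbarpos i j)) (hxbarle1 i j))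
    · apply Real.log_nonneg
      have : (1:ℕ) ≤ n + v := by omega
      exact_mod_cast this
  have hwnn : ∀ j, 0 ≤ w j := by
    intro j
    rw [hw]
    apply div_nonneg
    · linarith [hennp j]
    · apply Finset.sum_nonneg
      intro j' _
      linarith [hennp j']
  -- dominance monotone in first argument
  have hdmono : ∀ (j : Fin m) (s s' t : ℝ), s ≤ s' → d j s t ≤ d j s' t := by
    intro j s s' t hss
    have hwj := hwnn j
    rcases lt_trichotomy s t with h1 | h1 | h1
    · rcases lt_trichotomy s' t with h2 | h2 | h2
      · rw [hd_lt _ _ _ h1, hd_lt _ _ _ h2]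
        have h3 : (t - s') ^ (0.88:ℝ) ≤ (t - s) ^ (0.88:ℝ) :=
          Real.rpow_le_rpow (by linarith) (by linarith) (by norm_num)
        nlinarith [mul_le_mul_of_nonneg_left h3 hwj]
      · rw [hd_lt _ _ _ h1, hd_eq _ _ _ h2]
        have hA := Real.rpow_nonneg (show (0:ℝ) ≤ t - s by linarith) (0.88:ℝ)
        nlinarith [mul_nonneg hwj hA]
      · rw [hd_lt _ _ _ h1, hd_gt _ _ _ h2]
        have hA := Real.rpow_nonneg (show (0:ℝ) ≤ t - s by linarith) (0.88:ℝ)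
        have hB := Real.rpow_nonneg (show (0:ℝ) ≤ w j * (s' - t) from mul_nonneg hwj (by linarith)) (0.88:ℝ)
        nlinarith [mul_nonneg hwj hA]
    · subst h1
      rw [hd_eq _ _ _ rfl]
      rcases eq_or_lt_of_le hss with h2 | h2
      · rw [hd_eq _ _ _ h2.symm]
      · rw [hd_gt _ _ _ h2]
        exact Real.rpow_nonneg (mul_nonneg hwj (by linarith)) _
    · rw [hd_gt _ _ _ h1, hd_gt _ _ _ (lt_of_lt_of_le h1 hss)]
      exact Real.rpow_le_rpow (mul_nonneg hwj (by linarith)) (by nlinarith) (by norm_num)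
  rw [hscore, hscore]
  apply Finset.sum_le_sum
  intro k _
  apply Finset.sum_le_sum
  intro j _
  exact hdmono j _ _ _ (hxbartop a j)
end

section
/- Let X be an n×m matrix of strictly positive evaluations (n ≥ 1 alternatives, m ≥ 1 criteria) and let v ≥ 2 be an integer. Form the expanded (n+v)×m evaluation matrix by appending the virtual alternatives â_{1,v}, …, â_{v,v}, and apply the entropy-weight TODIM method to it: normalize each column by its maximum, compute entropy weights w_j = (1 − ê_j)/Σ_{j'} (1 − ê_{j'}) with ê_j = (Σ_i x̄^j_i ln x̄^j_i)/ln(n+v), and compute scores ŝ_i = Σ_k Σ_j d_j(x̄^j_i, x̄^j_k) with d_j(s,t) = (w_j·(s−t))^{0.88} if s > t, 0 if s = t, −2.25·w_j·(t−s)^{0.88} if s < t. Then the bottom virtual alternative â_{1,v} attains the minimal score: ŝ(â_{1,v}) ≤ ŝ(a) for every alternative a of the expanded set. -/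
/-- Let `X` be an `n × m` matrix of strictly positive evaluations
(`n ≥ 1`, `m ≥ 1`) and `v ≥ 2`. Form the expanded `(n+v) × m` matrix `Y` by appending
the virtual alternatives (the virtual index `d : Fin v` encodes position `d+1`, with
evaluation `xmin j + ((d-1)/(v-1)) * (xmax j - xmin j)` on criterion `j`), and apply the
entropy-weight TODIM method to `Y`: normalize each column by its maximum, compute entropy
weights `w_j = (1 - ê_j)/∑ j', (1 - ê_{j'})` with
`ê_j = (∑ i, x̄^j_i ln x̄^j_i)/ln(n+v)`, and compute scores
`ŝ_i = ∑ k, ∑ j, d_j(x̄^j_i, x̄^j_k)` with `d_j(s,t) = (w_j*(s-t))^0.88` if `s > t`,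
`0` if `s = t`, `-2.25*w_j*(t-s)^0.88` if `s < t`. Then the bottom virtual alternative
`â_{1,v}` attains the minimal score. -/
theorem bottom_virtual_alternative_minimal_score
    (n m v : ℕ) (hn : 1 ≤ n) (hm : 1 ≤ m) (hv : 2 ≤ v)
    (X : Fin n → Fin m → ℝ) (hXpos : ∀ i j, 0 < X i j)
    (xmax xmin : Fin m → ℝ)
    (hmax : ∀ j, IsGreatest (Set.range fun i => X i j) (xmax j))
    (hmin : ∀ j, IsLeast (Set.range fun i => X i j) (xmin j))
    (Y : Fin (n + v) → Fin m → ℝ)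
    (hYorig : ∀ (i : Fin n) (j : Fin m), Y (Fin.castAdd v i) j = X i j)
    (hYvirt : ∀ (d : Fin v) (j : Fin m),
      Y (Fin.natAdd n d) j = xmin j + ((d : ℝ) / ((v : ℝ) - 1)) * (xmax j - xmin j))
    (ymax : Fin m → ℝ)
    (hymax : ∀ j, IsGreatest (Set.range fun i => Y i j) (ymax j))
    (xbar : Fin (n + v) → Fin m → ℝ)
    (hxbar : ∀ i j, xbar i j = Y i j / ymax j)
    (e : Fin m → ℝ)
    (he : ∀ j, e j =
      (∑ i, xbar i j * Real.log (xbar i j)) / Real.log ((n + v : ℕ) : ℝ))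
    (w : Fin m → ℝ)
    (hw : ∀ j, w j = (1 - e j) / ∑ j', (1 - e j'))
    (d : Fin m → ℝ → ℝ → ℝ)
    (hd_gt : ∀ (j : Fin m) (s t : ℝ), t < s → d j s t = (w j * (s - t)) ^ (0.88 : ℝ))
    (hd_eq : ∀ (j : Fin m) (s t : ℝ), s = t → d j s t = 0)
    (hd_lt : ∀ (j : Fin m) (s t : ℝ), s < t →
      d j s t = -2.25 * w j * (t - s) ^ (0.88 : ℝ))
    (score : Fin (n + v) → ℝ)
    (hscore : ∀ i, score i = ∑ k, ∑ j, d j (xbar i j) (xbar k j)) :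
    ∀ a : Fin (n + v), score (Fin.natAdd n ⟨0, by omega⟩) ≤ score a := by

  intro a
  have hvpos : (0:ℝ) < (v:ℝ) - 1 := by
    have : (2:ℝ) ≤ (v:ℝ) := by exact_mod_cast hv
    linarith
  -- xmax ≥ xmin
  have hx0 : Fin n := ⟨0, hn⟩
  have hmaxmin : ∀ j, xmin j ≤ xmax j := fun j =>
    le_trans ((hmin j).2 ⟨hx0, rfl⟩) ((hmax j).2 ⟨hx0, rfl⟩)
  have hxminpos : ∀ j, 0 < xmin j := by
    intro j
    obtain ⟨i, hi⟩ := (hmin j).1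
    rw [← hi]; exact hXpos i j
  -- Y positive and ≥ xmin
  have hYge : ∀ i j, xmin j ≤ Y i j := by
    intro i j
    induction i using Fin.addCases with
    | left i => rw [hYorig]; exact (hmin j).2 ⟨i, rfl⟩
    | right dd =>
      rw [hYvirt]
      have h1 : (0:ℝ) ≤ (dd:ℝ) / ((v:ℝ) - 1) := by positivity
      nlinarith [hmaxmin j]
  have hYpos : ∀ i j, 0 < Y i j := fun i j => lt_of_lt_of_le (hxminpos j) (hYge i j)
  have hymaxpos : ∀ j, 0 < ymax j := by
    intro j
    obtain ⟨i, hi⟩ := (hymax j).1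
    rw [← hi]; exact hYpos i j
  have hYle : ∀ i j, Y i j ≤ ymax j := fun i j => (hymax j).2 ⟨i, rfl⟩
  have hxbarpos : ∀ i j, 0 < xbar i j := by
    intro i j; rw [hxbar]; exact div_pos (hYpos i j) (hymaxpos j)
  have hxbarle1 : ∀ i j, xbar i j ≤ 1 := by
    intro i j; rw [hxbar]
    exact div_le_one_of_le₀ (hYle i j) (le_of_lt (hymaxpos j))
  -- entropy nonpositive
  have henonpos : ∀ j, e j ≤ 0 := by
    intro j
    rw [he]
    have hnum : (∑ i, xbar i j * Real.log (xbar i j)) ≤ 0 := by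
      apply Finset.sum_nonpos
      intro i _
      exact mul_nonpos_of_nonneg_of_nonpos (le_of_lt (hxbarpos i j))
        (Real.log_nonpos (le_of_lt (hxbarpos i j)) (hxbarle1 i j))
    have hden : 0 < Real.log ((n + v : ℕ) : ℝ) := by
      apply Real.log_pos
      have : (3:ℕ) ≤ n + v := by omega
      exact_mod_cast lt_of_lt_of_le (by norm_num : (1:ℕ) < 3) this
    exact div_nonpos_of_nonpos_of_nonneg hnum (le_of_lt hden)
  have hwpos : ∀ j, 0 < w j := by
    intro j
    rw [hw]
    apply div_pos (by linarith [henonpos j])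
    apply Finset.sum_pos
    · intro j' _; linarith [henonpos j']
    · have : Nonempty (Fin m) := ⟨⟨0, hm⟩⟩
      exact Finset.univ_nonempty
  -- monotonicity of d in first argument
  have hdmono : ∀ (j : Fin m) (s s' t : ℝ), s ≤ s' → d j s t ≤ d j s' t := by
    intro j s s' t hss
    rcases eq_or_lt_of_le hss with heq | hlt
    · subst heq; rfl
    rcases lt_trichotomy s t with h1 | h1 | h1
    · have hst : d j s t = -2.25 * w j * (t - s) ^ (0.88:ℝ) := hd_lt j s t h1
      rcases lt_trichotomy s' t with h2 | h2 | h2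
      · rw [hst, hd_lt j s' t h2]
        have hb : (t - s') ^ (0.88:ℝ) ≤ (t - s) ^ (0.88:ℝ) :=
          Real.rpow_le_rpow (by linarith) (by linarith) (by norm_num)
        nlinarith [hwpos j]
      · rw [hst, hd_eq j s' t h2]
        have : (0:ℝ) ≤ (t - s) ^ (0.88:ℝ) := Real.rpow_nonneg (by linarith) _
        nlinarith [hwpos j]
      · rw [hst, hd_gt j s' t h2]
        have h3 : (0:ℝ) ≤ (t - s) ^ (0.88:ℝ) := Real.rpow_nonneg (by linarith) _
        have h4 : (0:ℝ) ≤ (w j * (s' - t)) ^ (0.88:ℝ) :=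
          Real.rpow_nonneg (by nlinarith [hwpos j]) _
        nlinarith [hwpos j]
    · subst h1
      rw [hd_eq j s s rfl, hd_gt j s' s hlt]
      exact Real.rpow_nonneg (by nlinarith [hwpos j]) _
    · rw [hd_gt j s t h1, hd_gt j s' t (lt_trans h1 hlt)]
      apply Real.rpow_le_rpow (by nlinarith [hwpos j]) _ (by norm_num)
      nlinarith [hwpos j]
  -- bottom virtual alternative has minimal xbar
  set b : Fin (n + v) := Fin.natAdd n ⟨0, by omega⟩ with hb
  have hYb : ∀ j, Y b j = xmin j := by
    intro j
    rw [hb, hYvirt]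
    simp
  have hxbarb : ∀ i j, xbar b j ≤ xbar i j := by
    intro i j
    rw [hxbar, hxbar]
    apply div_le_div_of_nonneg_right _ (le_of_lt (hymaxpos j))
    rw [hYb]; exact hYge i j
  rw [hscore, hscore]
  apply Finset.sum_le_sum
  intro k _
  apply Finset.sum_le_sum
  intro j _
  exact hdmono j _ _ _ (hxbarb a j)
end

section
/- Let x̄ be an n×m real matrix of normalized evaluations, let w_1, …, w_m > 0 be weights, and define the total dominance D_{i,k} = Σ_{j=1}^m d_j(x̄^j_i, x̄^j_k) with d_j(s,t) = (w_j·(s−t))^{0.88} if s > t, 0 if s = t, −2.25·w_j·(t−s)^{0.88} if s < t. If alternative i1 weakly Pareto dominates alternative i3, i.e. x̄^j_{i1} ≥ x̄^j_{i3} for every criterion j, then for every alternative i2, D_{i1,i2} ≥ D_{i3,i2}. -/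
/-- Let `x̄` be an `n × m` matrix of normalized evaluations, `w_j > 0`
weights, and `D_{i,k} = ∑ j, d_j(x̄^j_i, x̄^j_k)` the total dominance with
`d_j(s,t) = (w_j*(s-t))^0.88` if `s > t`, `0` if `s = t`, `-2.25*w_j*(t-s)^0.88` if
`s < t`. If alternative `i1` weakly Pareto dominates `i3` (`x̄^j_{i1} ≥ x̄^j_{i3}` for
all `j`), then for every alternative `i2`, `D_{i1,i2} ≥ D_{i3,i2}`. -/
theorem todim_total_dominance_monotone_weak_pareto
    (n m : ℕ)
    (xbar : Fin n → Fin m → ℝ)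
    (w : Fin m → ℝ) (hw : ∀ j, 0 < w j)
    (d : Fin m → ℝ → ℝ → ℝ)
    (hd_gt : ∀ (j : Fin m) (s t : ℝ), t < s → d j s t = (w j * (s - t)) ^ (0.88 : ℝ))
    (hd_eq : ∀ (j : Fin m) (s t : ℝ), s = t → d j s t = 0)
    (hd_lt : ∀ (j : Fin m) (s t : ℝ), s < t →
      d j s t = -2.25 * w j * (t - s) ^ (0.88 : ℝ))
    (i1 i3 : Fin n)
    (hpar : ∀ j : Fin m, xbar i3 j ≤ xbar i1 j) :
    ∀ i2 : Fin n,
      (∑ j, d j (xbar i3 j) (xbar i2 j)) ≤ ∑ j, d j (xbar i1 j) (xbar i2 j) := by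
  intro i2
  apply Finset.sum_le_sum
  intro j _
  set a := xbar i1 j
  set b := xbar i3 j
  set t := xbar i2 j
  have hba : b ≤ a := hpar j
  have hwj := hw j
  -- d j is monotone in first argument
  rcases lt_trichotomy t a with hta | hta | hta
  · rw [hd_gt j a t hta]
    have hpos : (0:ℝ) ≤ (w j * (a - t)) ^ (0.88 : ℝ) :=
      Real.rpow_nonneg (by nlinarith) _
    rcases lt_trichotomy t b with htb | htb | htb
    · rw [hd_gt j b t htb]
      apply Real.rpow_le_rpow (by nlinarith) (by nlinarith) (by norm_num)
    · rw [hd_eq j b t htb.symm]; exact hpos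
    · rw [hd_lt j b t htb]
      have : (0:ℝ) ≤ (t - b) ^ (0.88 : ℝ) := Real.rpow_nonneg (by linarith) _
      nlinarith
  · rw [hd_eq j a t hta.symm]
    rcases lt_or_eq_of_le hba with htb | htb
    · rw [hd_lt j b t (by linarith)]
      have : (0:ℝ) ≤ (t - b) ^ (0.88 : ℝ) := Real.rpow_nonneg (by linarith) _
      nlinarith
    · rw [hd_eq j b t (by linarith)]
  · rw [hd_lt j a t hta, hd_lt j b t (by linarith)]
    have h1 : (t - a) ^ (0.88 : ℝ) ≤ (t - b) ^ (0.88 : ℝ) :=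
      Real.rpow_le_rpow (by linarith) (by linarith) (by norm_num)
    nlinarith
end
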